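/- Let A be the group with presentation ⟨a, b | a^k b = b a^k⟩ where k ≥ 2. Then the center of A is the infinite cyclic subgroup generated by c = a^k, and the quotient A/Z(A) is isomorphic to the free product C_k ⋆ ℤ. -/

import Mathlib

/-- Relator for `A = ⟨a, b | aᵏ b = b aᵏ⟩`, with `a = of 0`, `b = of 1`. -/
def relEvenDihedral (k : ℕ) : Set (FreeGroup (Fin 2)) :=
  {FreeGroup.of 0 ^ k * FreeGroup.of 1 * (FreeGroup.of 0 ^ k)⁻¹ * (FreeGroup.of 1)⁻¹}

/-- Relators for the free product `C_k ⋆ ℤ = ⟨u, v | uᵏ = 1⟩`. -/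
def relCkZ (k : ℕ) : Set (FreeGroup (Fin 2)) :=
  {FreeGroup.of 0 ^ k}

namespace Stmt5Aux

open Monoid Multiplicative

theorem coprodI_center_eq_bot {ι : Type*} [DecidableEq ι] {G : ι → Type*} [∀ i, Group (G i)]
    [∀ i, DecidableEq (G i)]
    (hn : ∀ i, ∃ g : G i, g ≠ 1) (hι : ∀ j : ι, ∃ m, m ≠ j) :
    Subgroup.center (CoprodI G) = ⊥ := by
  rw [eq_bot_iff]
  intro z hz
  rw [Subgroup.mem_bot]
  by_contra hne
  set w : CoprodI.Word G := CoprodI.Word.equiv z with hw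
  have hzw : w.prod = z := CoprodI.Word.equiv.symm_apply_apply z
  have hwne : w ≠ CoprodI.Word.empty := by
    intro h
    exact hne (by rw [← hzw, h, CoprodI.Word.prod_empty])
  obtain ⟨i, j, w', hw'⟩ := CoprodI.NeWord.of_word w hwne
  have hprod : w'.prod = z := by rw [CoprodI.NeWord.prod, hw', hzw]
  obtain ⟨m, hm⟩ := hι j
  obtain ⟨x, hx⟩ := hn m
  set s := CoprodI.NeWord.singleton x hx with hs
  set W := CoprodI.NeWord.append (CoprodI.NeWord.append w' (Ne.symm hm) s) hm w'.inv with hW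
  have hWp : W.prod = CoprodI.of x := by
    have hc : CoprodI.of x * z = z * CoprodI.of x := Subgroup.mem_center_iff.mp hz (CoprodI.of x)
    rw [hW, CoprodI.NeWord.append_prod, CoprodI.NeWord.append_prod,
      CoprodI.NeWord.inv_prod, hprod, hs, CoprodI.NeWord.prod_singleton,
      ← hc, mul_inv_cancel_right]
  have hws : W.toWord = s.toWord := by
    apply CoprodI.Word.equiv.symm.injective
    show W.toWord.prod = s.toWord.prod
    rw [← CoprodI.NeWord.prod, ← CoprodI.NeWord.prod, hWp, hs, CoprodI.NeWord.prod_singleton]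
  have hlen := congrArg (fun u : CoprodI.Word G => u.toList.length) hws
  have h1 : w'.toList ≠ [] := CoprodI.NeWord.toList_ne_nil w'
  have h2 : w'.inv.toList ≠ [] := CoprodI.NeWord.toList_ne_nil w'.inv
  have h1' := List.length_pos_iff.mpr h1
  have h2' := List.length_pos_iff.mpr h2
  simp only [hW, hs, CoprodI.NeWord.toWord, CoprodI.NeWord.toList, List.length_append,
    List.length_singleton] at hlen
  omega


abbrev Q (k : ℕ) := PresentedGroup (relCkZ k)
abbrev A (k : ℕ) := PresentedGroup (relEvenDihedral k)



def GF (k : ℕ) : Fin 2 → Type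
  | 0 => Multiplicative (ZMod k)
  | 1 => Multiplicative ℤ

instance (k : ℕ) : (i : Fin 2) → Group (GF k i)
  | 0 => inferInstanceAs (Group (Multiplicative (ZMod k)))
  | 1 => inferInstanceAs (Group (Multiplicative ℤ))

instance (k : ℕ) : (i : Fin 2) → DecidableEq (GF k i)
  | 0 => inferInstanceAs (DecidableEq (Multiplicative (ZMod k)))
  | 1 => inferInstanceAs (DecidableEq (Multiplicative ℤ))

def gen (k : ℕ) : (i : Fin 2) → GF k i
  | 0 => Multiplicative.ofAdd (1 : ZMod k)
  | 1 => Multiplicative.ofAdd (1 : ℤ)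

def aQ (k : ℕ) : Q k := PresentedGroup.of 0

lemma aQ_pow (k : ℕ) : aQ k ^ k = 1 := by
  have h : PresentedGroup.mk (relCkZ k) (FreeGroup.of 0 ^ k) = 1 :=
    (QuotientGroup.eq_one_iff _).mpr
      (Subgroup.subset_normalClosure (by simp [relCkZ]))
  rwa [map_pow] at h

lemma gen0_pow (k : ℕ) : (Multiplicative.ofAdd (1 : ZMod k)) ^ k = 1 := by
  rw [← ofAdd_nsmul]
  simp

def fQ (k : ℕ) : Q k →* CoprodI (GF k) :=
  PresentedGroup.toGroup (f := fun i => (CoprodI.of (gen k i) : CoprodI (GF k)))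
    (by
      intro r hr
      rw [relCkZ, Set.mem_singleton_iff] at hr
      subst hr
      rw [map_pow, FreeGroup.lift_apply_of, ← map_pow]
      show CoprodI.of ((gen k 0) ^ k) = 1
      rw [show (gen k 0 : GF k 0) ^ k = 1 from gen0_pow k, map_one])

def h0 (k : ℕ) : Multiplicative (ZMod k) →* Q k :=
  AddMonoidHom.toMultiplicativeLeft
    (ZMod.lift k ⟨MonoidHom.toAdditiveRight (zpowersHom (Q k) (aQ k)), by
      show Additive.ofMul (aQ k ^ (k : ℤ)) = 0
      rw [zpow_natCast, aQ_pow]; rfl⟩)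

lemma h0_apply_one (k : ℕ) : h0 k (Multiplicative.ofAdd (1 : ZMod k)) = aQ k := by
  have : ((1 : ℤ) : ZMod k) = (1 : ZMod k) := by push_cast; ring
  rw [h0, AddMonoidHom.coe_toMultiplicativeLeft]
  show Additive.toMul (ZMod.lift k _ ((ofAdd (1 : ZMod k)).toAdd)) = aQ k
  rw [show (ofAdd (1 : ZMod k)).toAdd = ((1 : ℤ) : ZMod k) from by rw [this]; rfl]
  rw [ZMod.lift_coe]
  show (zpowersHom (Q k) (aQ k)) (ofAdd (1:ℤ)) = aQ k
  simp

def hfam (k : ℕ) : (i : Fin 2) → (GF k i →* Q k)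
  | 0 => h0 k
  | 1 => zpowersHom (Q k) (PresentedGroup.of 1)

def gQ (k : ℕ) : CoprodI (GF k) →* Q k := CoprodI.lift (hfam k)

lemma gf (k : ℕ) : (gQ k).comp (fQ k) = MonoidHom.id (Q k) := by
  apply PresentedGroup.ext
  intro x
  fin_cases x
  · show gQ k (fQ k (PresentedGroup.of 0)) = PresentedGroup.of 0
    rw [show fQ k (PresentedGroup.of 0) = CoprodI.of (gen k 0) from PresentedGroup.toGroup.of _,
      gQ, CoprodI.lift_of]
    exact h0_apply_one k
  · show gQ k (fQ k (PresentedGroup.of 1)) = PresentedGroup.of 1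
    rw [show fQ k (PresentedGroup.of 1) = CoprodI.of (gen k 1) from PresentedGroup.toGroup.of _,
      gQ, CoprodI.lift_of]
    show (zpowersHom (Q k) (PresentedGroup.of 1)) (ofAdd (1:ℤ)) = PresentedGroup.of 1
    simp

lemma fg (k : ℕ) : (fQ k).comp (gQ k) = MonoidHom.id (CoprodI (GF k)) := by
  apply CoprodI.ext_hom
  intro i
  fin_cases i
  · have hsurj : Function.Surjective
        (AddMonoidHom.toMultiplicative (Int.castAddHom (ZMod k))) := by
      intro y
      obtain ⟨n, hn⟩ := ZMod.intCast_surjective (y.toAdd)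
      exact ⟨Multiplicative.ofAdd n, by simp [hn]⟩
    apply (MonoidHom.cancel_right hsurj).mp
    apply MonoidHom.ext_mint
    show (fQ k) ((gQ k) (CoprodI.of (M := GF k) (i := 0) (ofAdd ((1:ℤ) : ZMod k))))
        = CoprodI.of (M := GF k) (i := 0) (ofAdd ((1:ℤ) : ZMod k))
    rw [show ((1:ℤ) : ZMod k) = (1 : ZMod k) from by push_cast; ring]
    rw [gQ]; erw [CoprodI.lift_of]
    show fQ k (h0 k (ofAdd (1 : ZMod k))) = _
    rw [h0_apply_one k]
    exact PresentedGroup.toGroup.of _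
  · apply MonoidHom.ext_mint
    show (fQ k) ((gQ k) (CoprodI.of (M := GF k) (i := 1) (ofAdd (1:ℤ))))
        = CoprodI.of (M := GF k) (i := 1) (ofAdd (1:ℤ))
    rw [gQ]; erw [CoprodI.lift_of]
    show fQ k ((zpowersHom (Q k) (PresentedGroup.of 1)) (ofAdd (1:ℤ))) = _
    rw [zpowersHom_apply]
    simp only [toAdd_ofAdd, zpow_one]
    exact PresentedGroup.toGroup.of _

noncomputable def eQ (k : ℕ) : Q k ≃* CoprodI (GF k) :=
  MonoidHom.toMulEquiv (fQ k) (gQ k) (gf k) (fg k)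


lemma centerQ (k : ℕ) (hk : 2 ≤ k) : Subgroup.center (Q k) = ⊥ := by
  haveI : Fact (1 < k) := ⟨hk⟩
  rw [eq_bot_iff]
  intro z hz
  rw [Subgroup.mem_bot]
  have h1 : eQ k z ∈ Subgroup.center (CoprodI (GF k)) := by
    rw [Subgroup.mem_center_iff]
    intro g'
    obtain ⟨v, rfl⟩ := (eQ k).surjective g'
    rw [← map_mul, ← map_mul, Subgroup.mem_center_iff.mp hz v]
  have hbot : Subgroup.center (CoprodI (GF k)) = ⊥ := by
    apply coprodI_center_eq_bot
    · intro i
      fin_cases i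
      · refine ⟨(Multiplicative.ofAdd (1 : ZMod k) : GF k 0), ?_⟩
        show ¬(Multiplicative.ofAdd (1 : ZMod k) = 1)
        intro h
        have h1 := congrArg Multiplicative.toAdd h
        simp only [toAdd_ofAdd, toAdd_one] at h1
        exact one_ne_zero h1
      · refine ⟨(Multiplicative.ofAdd (1 : ℤ) : GF k 1), ?_⟩
        show ¬(Multiplicative.ofAdd (1 : ℤ) = 1)
        intro h
        have h1 := congrArg Multiplicative.toAdd h
        simp only [toAdd_ofAdd, toAdd_one] at h1
        norm_num at h1
    · intro j
      fin_cases j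
      · exact ⟨1, by decide⟩
      · exact ⟨0, by decide⟩
  rw [hbot, Subgroup.mem_bot] at h1
  exact (eQ k).injective (by rw [h1, map_one])

-- A side
def cA (k : ℕ) : A k := (PresentedGroup.of 0) ^ k

lemma relA (k : ℕ) : cA k * PresentedGroup.of 1 = PresentedGroup.of 1 * cA k := by
  have h : PresentedGroup.mk (relEvenDihedral k)
      (FreeGroup.of 0 ^ k * FreeGroup.of 1 * (FreeGroup.of 0 ^ k)⁻¹ * (FreeGroup.of 1)⁻¹) = 1 :=
    (QuotientGroup.eq_one_iff _).mpr
      (Subgroup.subset_normalClosure (by simp [relEvenDihedral]))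
  simp only [map_mul, map_inv, map_pow] at h
  rw [mul_inv_eq_one, mul_inv_eq_iff_eq_mul] at h
  exact h

lemma cA_mem_center (k : ℕ) : cA k ∈ Subgroup.center (A k) := by
  rw [Subgroup.mem_center_iff]
  intro g
  have hg : g ∈ Subgroup.centralizer {cA k} := by
    apply PresentedGroup.generated_by
    intro j
    fin_cases j
    · rw [Subgroup.mem_centralizer_iff]
      rintro h' rfl
      show cA k * PresentedGroup.of 0 = PresentedGroup.of 0 * cA k
      rw [cA, ← pow_succ, ← pow_succ']
    · rw [Subgroup.mem_centralizer_iff]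
      rintro h' rfl
      exact relA k
  rw [Subgroup.mem_centralizer_iff] at hg
  exact (hg (cA k) rfl).symm

def phi (k : ℕ) : A k →* Q k :=
  PresentedGroup.toGroup (f := fun i => (PresentedGroup.of i : Q k))
    (by
      intro r hr
      rw [relEvenDihedral, Set.mem_singleton_iff] at hr
      subst hr
      simp only [map_mul, map_inv, map_pow, FreeGroup.lift_apply_of]
      rw [show ((PresentedGroup.of 0 : Q k)) ^ k = 1 from aQ_pow k]
      simp)

lemma phi_mk (k : ℕ) (w : FreeGroup (Fin 2)) :
    phi k (PresentedGroup.mk _ w) = PresentedGroup.mk (relCkZ k) w := by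
  have : (phi k).comp (PresentedGroup.mk (relEvenDihedral k)) = PresentedGroup.mk (relCkZ k) := by
    apply FreeGroup.ext_hom
    intro i
    show phi k (PresentedGroup.of i) = PresentedGroup.of i
    exact PresentedGroup.toGroup.of _
  exact DFunLike.congr_fun this w

lemma phi_surj (k : ℕ) : Function.Surjective (phi k) := by
  intro q
  induction q using PresentedGroup.induction_on with
  | H w => exact ⟨PresentedGroup.mk _ w, phi_mk k w⟩

instance zpowers_cA_normal (k : ℕ) : (Subgroup.zpowers (cA k)).Normal := by
  constructor
  intro n hn g
  have hc : n ∈ Subgroup.center (A k) :=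
    Subgroup.zpowers_le.mpr (cA_mem_center k) hn
  rw [Subgroup.mem_center_iff.mp hc g, mul_inv_cancel_right]
  exact hn

lemma ker_phi (k : ℕ) : (phi k).ker = Subgroup.zpowers (cA k) := by
  apply le_antisymm
  · intro z hz
    induction z using PresentedGroup.induction_on with
    | H w =>
      rw [MonoidHom.mem_ker, phi_mk] at hz
      have hw : w ∈ Subgroup.normalClosure (relCkZ k) := (QuotientGroup.eq_one_iff _).mp hz
      have hle : Subgroup.normalClosure (relCkZ k) ≤
          Subgroup.comap (PresentedGroup.mk (relEvenDihedral k)) (Subgroup.zpowers (cA k)) := by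
        haveI : (Subgroup.comap (PresentedGroup.mk (relEvenDihedral k))
            (Subgroup.zpowers (cA k))).Normal := (zpowers_cA_normal k).comap _
        apply Subgroup.normalClosure_le_normal
        rintro r hr
        rw [relCkZ, Set.mem_singleton_iff] at hr
        subst hr
        show PresentedGroup.mk _ (FreeGroup.of 0 ^ k) ∈ Subgroup.zpowers (cA k)
        rw [map_pow]
        exact Subgroup.mem_zpowers _
      exact hle hw
  · rw [Subgroup.zpowers_le]
    rw [MonoidHom.mem_ker]
    show phi k ((PresentedGroup.of 0) ^ k) = 1
    rw [map_pow]
    rw [show phi k (PresentedGroup.of 0) = PresentedGroup.of 0 from PresentedGroup.toGroup.of _]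
    exact aQ_pow k

lemma center_le_ker (k : ℕ) (hk : 2 ≤ k) : Subgroup.center (A k) ≤ (phi k).ker := by
  intro z hz
  have h1 : phi k z ∈ Subgroup.center (Q k) := by
    rw [Subgroup.mem_center_iff]
    intro q
    obtain ⟨a, rfl⟩ := phi_surj k q
    rw [← map_mul, ← map_mul, Subgroup.mem_center_iff.mp hz a]
  rw [centerQ k hk, Subgroup.mem_bot] at h1
  exact h1

def psi (k : ℕ) : A k →* Multiplicative ℤ :=
  PresentedGroup.toGroup (f := fun i => if i = 0 then Multiplicative.ofAdd (1 : ℤ) else 1)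
    (by
      intro r hr
      rw [relEvenDihedral, Set.mem_singleton_iff] at hr
      subst hr
      simp)

lemma cA_not_finOrder (k : ℕ) (hk : 2 ≤ k) : ¬ IsOfFinOrder (cA k) := by
  intro h
  have h2 : IsOfFinOrder (psi k (cA k)) := (psi k).isOfFinOrder h
  have h3 : psi k (cA k) = Multiplicative.ofAdd (k : ℤ) := by
    rw [cA, map_pow]
    rw [show psi k (PresentedGroup.of 0) = Multiplicative.ofAdd (1 : ℤ) from
      PresentedGroup.toGroup.of _]
    rw [← ofAdd_nsmul]
    simp
  rw [h3, isOfFinOrder_iff_pow_eq_one] at h2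
  obtain ⟨n, hn, hpow⟩ := h2
  rw [← ofAdd_nsmul] at hpow
  have h4 := congrArg Multiplicative.toAdd hpow
  simp only [toAdd_ofAdd, toAdd_one, nsmul_eq_mul] at h4
  have hnk : n * k = 0 := by exact_mod_cast h4
  rcases Nat.mul_eq_zero.mp hnk with h' | h' <;> omega


end Stmt5Aux

/-- for `A = ⟨a, b | aᵏ b = b aᵏ⟩` with `k ≥ 2`, the centre of `A`
is the infinite cyclic subgroup generated by `c = aᵏ`, and `A/Z(A) ≅ C_k ⋆ ℤ`. -/
theorem stmt5 (k : ℕ) (hk : 2 ≤ k) :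
    Subgroup.center (PresentedGroup (relEvenDihedral k)) =
      Subgroup.zpowers ((PresentedGroup.of 0 : PresentedGroup (relEvenDihedral k)) ^ k) ∧
    ¬ IsOfFinOrder ((PresentedGroup.of 0 : PresentedGroup (relEvenDihedral k)) ^ k) ∧
    Nonempty
      ((PresentedGroup (relEvenDihedral k) ⧸
          Subgroup.center (PresentedGroup (relEvenDihedral k))) ≃*
        PresentedGroup (relCkZ k)) := by
  have hc_eq : Subgroup.center (PresentedGroup (relEvenDihedral k)) =
      Subgroup.zpowers (Stmt5Aux.cA k) :=
    le_antisymm (le_trans (Stmt5Aux.center_le_ker k hk) (le_of_eq (Stmt5Aux.ker_phi k)))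
      (Subgroup.zpowers_le.mpr (Stmt5Aux.cA_mem_center k))
  refine ⟨hc_eq, Stmt5Aux.cA_not_finOrder k hk, ?_⟩
  have heq : Subgroup.center (PresentedGroup (relEvenDihedral k)) = (Stmt5Aux.phi k).ker :=
    hc_eq.trans (Stmt5Aux.ker_phi k).symm
  exact ⟨(QuotientGroup.quotientMulEquivOfEq heq).trans
    (QuotientGroup.quotientKerEquivOfSurjective (Stmt5Aux.phi k) (Stmt5Aux.phi_surj k))⟩
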